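/- The space of symmetric-matrix-valued polynomial fields of degree at most k decomposes as a direct sum ℙ_k(ℝ^d; 𝕊) = def ℙ_{k+1}(ℝ^d; ℝ^d) ⊕ (ker(·x) ∩ ℙ_k(ℝ^d; 𝕊)), where ker(·x) consists of matrix fields τ with τ(x)·x ≡ 0. -/

import Mathlib

open MvPolynomial Finset

/-- The symmetric gradient `def q = sym(∇q)` of a polynomial vector field. -/
noncomputable def defGrad (d : ℕ) (q : Fin d → MvPolynomial (Fin d) ℝ) :
    Fin d → Fin d → MvPolynomial (Fin d) ℝ :=
  fun i j => C (2⁻¹ : ℝ) * (pderiv j (q i) + pderiv i (q j))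

namespace Stmt12Aux

variable {d : ℕ}

lemma degree_add' (a b : Fin d →₀ ℕ) : (a + b).degree = a.degree + b.degree := by
  simp [Finsupp.degree_eq_weight_one, map_add]

lemma euler_monomial (i : Fin d) (s : Fin d →₀ ℕ) (a : ℝ) :
    X i * pderiv i (monomial s a) = monomial s ((s i : ℝ) * a) := by
  rw [pderiv_monomial]
  by_cases h : s i = 0
  · simp [h]
  · have hle : Finsupp.single i 1 ≤ s := by
      rw [Finsupp.single_le_iff]; omega
    rw [X, monomial_mul, one_mul, add_comm, tsub_add_cancel_of_le hle, mul_comm]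

lemma euler {n : ℕ} {p : MvPolynomial (Fin d) ℝ} (hp : p.IsHomogeneous n) :
    ∑ j : Fin d, X j * pderiv j p = C (n : ℝ) * p := by
  conv_lhs => rw [← p.support_sum_monomial_coeff]
  conv_rhs => rw [← p.support_sum_monomial_coeff]
  simp only [map_sum, Finset.mul_sum, euler_monomial]
  rw [Finset.sum_comm]
  refine Finset.sum_congr rfl fun s hs => ?_
  rw [← map_sum, ← Finset.sum_mul, C_mul_monomial]
  congr 2
  have hdeg : s.degree = n := by
    by_contra hne
    exact (mem_support_iff.mp hs) (hp.coeff_eq_zero hne)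
  rw [← hdeg, Finsupp.degree_apply,
    Finset.sum_subset (Finset.subset_univ s.support) (by simp [Finsupp.notMem_support_iff])]
  push_cast
  rfl

lemma isHomogeneous_pderiv {n : ℕ} {p : MvPolynomial (Fin d) ℝ}
    (hp : p.IsHomogeneous (n + 1)) (i : Fin d) : (pderiv i p).IsHomogeneous n := by
  conv => enter [1]; rw [← p.support_sum_monomial_coeff]
  rw [map_sum]
  refine MvPolynomial.IsHomogeneous.sum _ _ _ fun s hs => ?_
  rw [pderiv_monomial]
  by_cases h : s i = 0
  · simp only [h, Nat.cast_zero, mul_zero, map_zero]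
    exact isHomogeneous_zero _ _ _
  · refine isHomogeneous_monomial _ ?_
    have hle : Finsupp.single i 1 ≤ s := by rw [Finsupp.single_le_iff]; omega
    have hdeg : s.degree = n + 1 := by
      by_contra hne
      exact (mem_support_iff.mp hs) (hp.coeff_eq_zero hne)
    have h2 : (s - Finsupp.single i 1).degree + (Finsupp.single i 1).degree = s.degree := by
      rw [← degree_add', tsub_add_cancel_of_le hle]
    have h3 : (Finsupp.single i 1).degree = 1 := by
      simp [Finsupp.degree_single]
    omega

lemma pderiv_of_hom0 {p : MvPolynomial (Fin d) ℝ}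
    (hp : p.IsHomogeneous 0) (i : Fin d) : pderiv i p = 0 := by
  conv => enter [1, 2]; rw [← p.support_sum_monomial_coeff]
  rw [map_sum]
  refine Finset.sum_eq_zero fun s hs => ?_
  have hdeg : s.degree = 0 := by
    by_contra hne
    exact (mem_support_iff.mp hs) (hp.coeff_eq_zero hne)
  have : s i = 0 := by have := Finsupp.le_degree i s; omega
  simp [this]

lemma C_cancel {c : ℝ} (hc : c ≠ 0) {p : MvPolynomial (Fin d) ℝ}
    (h : C c * p = 0) : p = 0 := by
  have : p = C c⁻¹ * (C c * p) := by
    rw [← mul_assoc, ← map_mul, inv_mul_cancel₀ hc, map_one, one_mul]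
  rw [this, h, mul_zero]

lemma pderiv_dot (w : Fin d → MvPolynomial (Fin d) ℝ) (i : Fin d) :
    pderiv i (∑ j : Fin d, w j * X j) = (∑ j : Fin d, pderiv i (w j) * X j) + w i := by
  rw [map_sum, Finset.sum_congr rfl fun j _ => pderiv_mul, Finset.sum_add_distrib]
  congr 1
  rw [Finset.sum_eq_single_of_mem i (Finset.mem_univ i)
    (fun j _ hne => by rw [pderiv_X_of_ne hne, mul_zero]), pderiv_X_self, mul_one]

lemma key {r : ℕ} (w : Fin d → MvPolynomial (Fin d) ℝ)
    (hw : ∀ i, (w i).IsHomogeneous r) (i : Fin d) :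
    ∑ j : Fin d, defGrad d w i j * X j
      = C (2⁻¹ : ℝ) * (C ((r : ℝ) - 1) * w i + pderiv i (∑ j : Fin d, w j * X j)) := by
  have hE : ∑ j : Fin d, pderiv j (w i) * X j = C (r : ℝ) * w i := by
    rw [← euler (hw i)]; exact Finset.sum_congr rfl fun j _ => mul_comm _ _
  have hL : ∑ j : Fin d, defGrad d w i j * X j
      = C (2⁻¹ : ℝ) * ((∑ j : Fin d, pderiv j (w i) * X j)
          + ∑ j : Fin d, pderiv i (w j) * X j) := by
    simp only [defGrad, mul_add, add_mul, Finset.mul_sum, Finset.sum_add_distrib, mul_assoc]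
  rw [hL, hE, pderiv_dot]
  have : (C ((r : ℝ) - 1) : MvPolynomial (Fin d) ℝ) = C (r : ℝ) - 1 := by
    rw [map_sub, map_one]
  rw [this]; ring


lemma core {r : ℕ} (w : Fin d → MvPolynomial (Fin d) ℝ)
    (hw : ∀ i, (w i).IsHomogeneous r)
    (h : ∀ i, ∑ j : Fin d, defGrad d w i j * X j = 0) :
    ∀ i j, defGrad d w i j = 0 := by
  have h' : ∀ i, C ((r : ℝ) - 1) * w i + pderiv i (∑ j : Fin d, w j * X j) = 0 := by
    intro i
    refine C_cancel (by norm_num : (2⁻¹ : ℝ) ≠ 0) ?_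
    rw [← key w hw i]; exact h i
  match r, hw, h' with
  | 0, hw, h' =>
    intro i j
    rw [defGrad, pderiv_of_hom0 (hw i), pderiv_of_hom0 (hw j), add_zero, mul_zero]
  | 1, hw, h' =>
    have hz : ∀ i, pderiv i (∑ j : Fin d, w j * X j) = 0 := by
      intro i
      have h1 : (C (((1 : ℕ) : ℝ) - 1) : MvPolynomial (Fin d) ℝ) = 0 := by norm_num
      have := h' i
      rwa [h1, zero_mul, zero_add] at this
    intro i j
    have h2 : pderiv j (pderiv i (∑ l : Fin d, w l * X l)) = 0 := by
      rw [hz i, map_zero]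
    rw [pderiv_dot, map_add, map_sum] at h2
    have h3 : ∀ l : Fin d, pderiv j (pderiv i (w l) * X l)
        = pderiv i (w l) * pderiv j (X l) := by
      intro l
      rw [pderiv_mul, pderiv_of_hom0 (isHomogeneous_pderiv (hw l) i) j, zero_mul, zero_add]
    rw [Finset.sum_congr rfl fun l _ => h3 l,
      Finset.sum_eq_single_of_mem j (Finset.mem_univ j)
        (fun l _ hne => by rw [pderiv_X_of_ne hne, mul_zero]), pderiv_X_self, mul_one] at h2
    rw [defGrad, add_comm, h2, mul_zero]
  | (m + 2), hw, h' =>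
    set r : ℕ := m + 2 with hr
    have hdot : (∑ j : Fin d, w j * X j).IsHomogeneous (r + 1) :=
      IsHomogeneous.sum _ _ _ fun j _ => (hw j).mul (isHomogeneous_X _ _)
    have hsum : C (2 * (r : ℝ)) * (∑ j : Fin d, w j * X j) = 0 := by
      have h0 : ∑ i : Fin d, X i *
          (C ((r : ℝ) - 1) * w i + pderiv i (∑ j : Fin d, w j * X j)) = 0 := by
        refine Finset.sum_eq_zero fun i _ => by rw [h' i, mul_zero]
      have hexp : ∑ i : Fin d, X i *
          (C ((r : ℝ) - 1) * w i + pderiv i (∑ j : Fin d, w j * X j))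
          = C ((r : ℝ) - 1) * (∑ j : Fin d, w j * X j)
            + ∑ i : Fin d, X i * pderiv i (∑ j : Fin d, w j * X j) := by
        rw [Finset.sum_congr rfl fun i (_ : i ∈ univ) =>
          mul_add (X i) (C ((r : ℝ) - 1) * w i) (pderiv i (∑ j : Fin d, w j * X j)),
          Finset.sum_add_distrib, Finset.mul_sum]
        congr 1
        exact Finset.sum_congr rfl fun i _ => by ring
      rw [hexp, euler hdot] at h0
      have : (C (2 * (r : ℝ)) : MvPolynomial (Fin d) ℝ)
          = C ((r : ℝ) - 1) + C ((r : ℝ) + 1) := by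
        rw [← map_add]; ring_nf
      rw [this, add_mul, ← h0]
      push_cast
      ring
    have hdot0 : (∑ j : Fin d, w j * X j) = 0 := by
      refine C_cancel ?_ hsum
      have : (0 : ℝ) < (r : ℝ) := by positivity
      positivity
    have hw0 : ∀ i, w i = 0 := by
      intro i
      have := h' i
      rw [hdot0, map_zero, add_zero] at this
      refine C_cancel ?_ this
      have : (1 : ℝ) < (r : ℝ) := by
        have : (2 : ℝ) ≤ (r : ℝ) := by exact_mod_cast Nat.le_add_left 2 m
        linarith
      intro hc
      rw [sub_eq_zero] at hc
      linarith [this]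
    intro i j
    simp [defGrad, hw0]


lemma defGrad_sum {ι : Type*} (F : Finset ι) (v : ι → Fin d → MvPolynomial (Fin d) ℝ)
    (i j : Fin d) :
    defGrad d (fun i => ∑ r ∈ F, v r i) i j = ∑ r ∈ F, defGrad d (v r) i j := by
  simp only [defGrad, map_sum]
  rw [← Finset.sum_add_distrib, Finset.mul_sum]

lemma hcsum {p : MvPolynomial (Fin d) ℝ} {N : ℕ} (h : p.totalDegree < N) :
    ∑ r ∈ range N, homogeneousComponent r p = p := by
  calc ∑ r ∈ range N, homogeneousComponent r p
      = ∑ r ∈ range (p.totalDegree + 1), homogeneousComponent r p := by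
        refine (Finset.sum_subset (by rw [range_subset_range]; omega) fun r hr hr' => ?_).symm
        simp only [mem_range] at hr hr'
        exact homogeneousComponent_eq_zero _ _ (by omega)
    _ = p := sum_homogeneousComponent p

lemma ghom (r : ℕ) (v : Fin d → MvPolynomial (Fin d) ℝ)
    (hv : ∀ i, (v i).IsHomogeneous r) (i : Fin d) :
    (∑ j : Fin d, defGrad d v i j * X j).IsHomogeneous r := by
  cases r with
  | zero =>
    have hz : ∀ j, defGrad d v i j = 0 := fun j => by
      rw [defGrad, pderiv_of_hom0 (hv i), pderiv_of_hom0 (hv j), add_zero, mul_zero]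
    rw [Finset.sum_eq_zero fun j _ => by rw [hz j, zero_mul]]
    exact isHomogeneous_zero _ _ _
  | succ n =>
    refine IsHomogeneous.sum _ _ _ fun j _ => ?_
    have h1 : (defGrad d v i j).IsHomogeneous n := by
      rw [defGrad]
      exact ((isHomogeneous_pderiv (hv i) j).add (isHomogeneous_pderiv (hv j) i)).C_mul _
    exact h1.mul (isHomogeneous_X _ _)

lemma zero_of (w : Fin d → MvPolynomial (Fin d) ℝ)
    (h : ∀ i, ∑ j : Fin d, defGrad d w i j * X j = 0) :
    ∀ i j, defGrad d w i j = 0 := by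
  set N := (Finset.univ.sup fun i => (w i).totalDegree) + 1 with hN
  have hwN : ∀ i, (w i).totalDegree < N :=
    fun i => Nat.lt_succ_of_le
      (Finset.le_sup (f := fun i => (w i).totalDegree) (Finset.mem_univ i))
  set v : ℕ → Fin d → MvPolynomial (Fin d) ℝ :=
    fun r i => homogeneousComponent r (w i) with hv
  have hw : ∀ i, w i = ∑ r ∈ range N, v r i := fun i => (hcsum (hwN i)).symm
  have hveq : ∀ i j, defGrad d w i j = ∑ r ∈ range N, defGrad d (v r) i j := by
    intro i j
    conv_lhs => rw [show w = fun i => ∑ r ∈ range N, v r i from funext hw]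
    rw [defGrad_sum]
  have hvhom : ∀ r i, (v r i).IsHomogeneous r :=
    fun r i => homogeneousComponent_isHomogeneous r (w i)
  have hg : ∀ r ∈ range N, ∀ i, ∑ j : Fin d, defGrad d (v r) i j * X j = 0 := by
    intro r hr i
    have hsum0 : ∑ r' ∈ range N, (∑ j : Fin d, defGrad d (v r') i j * X j) = 0 := by
      rw [← h i, Finset.sum_comm]
      exact Finset.sum_congr rfl fun j _ => by rw [← Finset.sum_mul, ← hveq i j]
    have hthis := congrArg (homogeneousComponent r) hsum0
    rw [map_sum, map_zero] at hthis
    have heach : ∀ r' ∈ range N,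
        homogeneousComponent r (∑ j : Fin d, defGrad d (v r') i j * X j)
          = if r = r' then ∑ j : Fin d, defGrad d (v r') i j * X j else 0 :=
      fun r' _ => homogeneousComponent_of_mem
        ((mem_homogeneousSubmodule _ _).mpr (ghom r' (v r') (hvhom r') i))
    rw [Finset.sum_congr rfl heach, Finset.sum_ite_eq] at hthis
    simpa [hr] using hthis
  intro i j
  rw [hveq i j]
  exact Finset.sum_eq_zero fun r hr => core (v r) (hvhom r) (hg r hr) i j


section Existence

variable (sg : Fin d → Fin d → MvPolynomial (Fin d) ℝ)

noncomputable def uu (r : ℕ) (i : Fin d) : MvPolynomial (Fin d) ℝ :=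
  ∑ j : Fin d, homogeneousComponent r (sg i j) * X j

noncomputable def sP (r : ℕ) : MvPolynomial (Fin d) ℝ :=
  ∑ i : Fin d, uu sg r i * X i

noncomputable def qr (r : ℕ) (i : Fin d) : MvPolynomial (Fin d) ℝ :=
  if r = 0 then uu sg 0 i else
    C (2 / (r : ℝ)) * uu sg r i
      + C (-1 / ((r : ℝ) * ((r : ℝ) + 1))) * pderiv i (sP sg r)

lemma uu_hom (r : ℕ) (i : Fin d) : (uu sg r i).IsHomogeneous (r + 1) :=
  IsHomogeneous.sum _ _ _ fun j _ =>
    (homogeneousComponent_isHomogeneous r (sg i j)).mul (isHomogeneous_X _ _)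

lemma sP_hom (r : ℕ) : (sP sg r).IsHomogeneous (r + 2) :=
  IsHomogeneous.sum _ _ _ fun i _ => (uu_hom sg r i).mul (isHomogeneous_X _ _)

lemma qr_hom (r : ℕ) (i : Fin d) : (qr sg r i).IsHomogeneous (r + 1) := by
  rw [qr]
  split
  · next h => subst h; exact uu_hom sg 0 i
  · exact ((uu_hom sg r i).C_mul _).add
      ((isHomogeneous_pderiv (sP_hom sg r) i).C_mul _)

lemma pderiv_uu_zero (i l : Fin d) :
    pderiv i (uu sg 0 l) = homogeneousComponent 0 (sg l i) := by
  rw [uu, map_sum]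
  rw [Finset.sum_congr rfl fun j (_ : j ∈ univ) => pderiv_mul
    (f := homogeneousComponent 0 (sg l j)) (g := X j)]
  rw [Finset.sum_congr rfl fun j (_ : j ∈ univ) => by
    rw [pderiv_of_hom0 (homogeneousComponent_isHomogeneous 0 (sg l j)) i, zero_mul, zero_add]]
  rw [Finset.sum_eq_single_of_mem i (Finset.mem_univ i)
    (fun j _ hne => by rw [pderiv_X_of_ne hne, mul_zero]), pderiv_X_self, mul_one]

lemma pderiv_sP_zero (hsym : ∀ i j, sg i j = sg j i) (i : Fin d) :
    pderiv i (sP sg 0) = uu sg 0 i + uu sg 0 i := by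
  rw [sP, pderiv_dot]
  congr 1
  rw [Finset.sum_congr rfl fun l (_ : l ∈ univ) => by rw [pderiv_uu_zero sg i l]]
  rw [uu]
  exact Finset.sum_congr rfl fun l _ => by rw [hsym l i]

lemma half_two : (C (2⁻¹ : ℝ) : MvPolynomial (Fin d) ℝ) * 2 = 1 := by
  rw [mul_two, ← map_add]
  norm_num

lemma defGrad_qr (hsym : ∀ i j, sg i j = sg j i) (r : ℕ) (i : Fin d) :
    ∑ j : Fin d, defGrad d (qr sg r) i j * X j = uu sg r i := by
  rw [key (qr sg r) (qr_hom sg r) i]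
  have hc : (((r + 1 : ℕ) : ℝ) - 1) = (r : ℝ) := by push_cast; ring
  rw [hc]
  rcases Nat.eq_zero_or_pos r with hr | hr
  · subst hr
    have hq : ∀ j, qr sg 0 j = uu sg 0 j := fun j => by rw [qr]; simp
    rw [Finset.sum_congr rfl fun j (_ : j ∈ univ) => by rw [hq j]]
    rw [hq i, show (∑ j : Fin d, uu sg 0 j * X j) = sP sg 0 from rfl,
      pderiv_sP_zero sg hsym i]
    rw [Nat.cast_zero, map_zero, zero_mul, zero_add, ← two_mul, ← mul_assoc, half_two, one_mul]
  · have hr0 : (r : ℝ) ≠ 0 := Nat.cast_ne_zero.mpr hr.ne'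
    have hr1 : (r : ℝ) + 1 ≠ 0 := by positivity
    have hq : ∀ j, qr sg r j = C (2 / (r : ℝ)) * uu sg r j
        + C (-1 / ((r : ℝ) * ((r : ℝ) + 1))) * pderiv j (sP sg r) := fun j => by
      rw [qr, if_neg hr.ne']
    set a : ℝ := 2 / (r : ℝ) with ha
    set b : ℝ := -1 / ((r : ℝ) * ((r : ℝ) + 1)) with hb
    have h2 : ∑ j : Fin d, pderiv j (sP sg r) * X j = C ((r : ℝ) + 2) * sP sg r := by
      rw [Finset.sum_congr rfl fun j (_ : j ∈ univ) => mul_comm (pderiv j (sP sg r)) (X j),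
        euler (sP_hom sg r)]
      norm_num
    have hdotq : ∑ j : Fin d, qr sg r j * X j
        = C a * sP sg r + C b * (C ((r : ℝ) + 2) * sP sg r) := by
      rw [Finset.sum_congr rfl fun j (_ : j ∈ univ) => by rw [hq j, add_mul, mul_assoc, mul_assoc]]
      rw [Finset.sum_add_distrib, ← Finset.mul_sum, ← Finset.mul_sum, h2, ← sP]
    rw [hdotq, hq i]
    rw [map_add, pderiv_C_mul, pderiv_C_mul, pderiv_C_mul]
    set u := uu sg r i
    set ds := pderiv i (sP sg r)
    have e1 : C (2⁻¹ : ℝ) * (C (r : ℝ) * (C a * u + C b * ds)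
        + (C a * ds + C b * (C ((r : ℝ) + 2) * ds)))
        = C (2⁻¹ * (r : ℝ) * a) * u
          + C (2⁻¹ * ((r : ℝ) * b + a + ((r : ℝ) + 2) * b)) * ds := by
      simp only [map_mul, map_add]
      ring
    rw [e1]
    have c1 : 2⁻¹ * (r : ℝ) * a = 1 := by
      rw [ha]; field_simp
    have c2 : 2⁻¹ * ((r : ℝ) * b + a + ((r : ℝ) + 2) * b) = 0 := by
      rw [ha, hb]; field_simp; ring
    rw [c1, c2, map_one, one_mul, map_zero, zero_mul, add_zero]

end Existence

end Stmt12Aux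

/-- Direct sum decomposition
`ℙ_k(ℝ^d; 𝕊) = def ℙ_{k+1}(ℝ^d; ℝ^d) ⊕ (ker(·x) ∩ ℙ_k(ℝ^d; 𝕊))`. -/
theorem stmt_12 (d k : ℕ) (hd : 1 ≤ d)
    (σ : Fin d → Fin d → MvPolynomial (Fin d) ℝ)
    (hsym : ∀ i j, σ i j = σ j i) (hdeg : ∀ i j, (σ i j).totalDegree ≤ k) :
    ∃! p : (Fin d → Fin d → MvPolynomial (Fin d) ℝ) ×
           (Fin d → Fin d → MvPolynomial (Fin d) ℝ),
      (∃ q : Fin d → MvPolynomial (Fin d) ℝ, (∀ i, (q i).totalDegree ≤ k + 1) ∧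
        p.1 = defGrad d q) ∧
      (∀ i j, (p.2 i j).totalDegree ≤ k) ∧ (∀ i j, p.2 i j = p.2 j i) ∧
      (∀ i, ∑ j : Fin d, p.2 i j * X j = 0) ∧
      σ = fun i j => p.1 i j + p.2 i j := by
  classical
  set q : Fin d → MvPolynomial (Fin d) ℝ :=
    fun i => ∑ r ∈ range (k + 1), Stmt12Aux.qr σ r i with hqdef
  have hqhom : ∀ r i, (Stmt12Aux.qr σ r i).IsHomogeneous (r + 1) :=
    fun r i => Stmt12Aux.qr_hom σ r i
  have hqdeg : ∀ i, (q i).totalDegree ≤ k + 1 := by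
    intro i
    refine totalDegree_finsetSum_le fun r hr => ?_
    refine (hqhom r i).totalDegree_le.trans ?_
    simp only [mem_range] at hr; omega
  have hDG : ∀ i j, defGrad d q i j
      = ∑ r ∈ range (k + 1), defGrad d (Stmt12Aux.qr σ r) i j := by
    intro i j
    rw [hqdef]
    exact Stmt12Aux.defGrad_sum (range (k + 1)) (fun r => Stmt12Aux.qr σ r) i j
  have hDGx : ∀ i, ∑ j : Fin d, defGrad d q i j * X j = ∑ j : Fin d, σ i j * X j := by
    intro i
    calc ∑ j : Fin d, defGrad d q i j * X j
        = ∑ j : Fin d, ∑ r ∈ range (k + 1), defGrad d (Stmt12Aux.qr σ r) i j * X j := by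
          refine Finset.sum_congr rfl fun j _ => ?_
          rw [hDG i j, Finset.sum_mul]
      _ = ∑ r ∈ range (k + 1), ∑ j : Fin d, defGrad d (Stmt12Aux.qr σ r) i j * X j :=
          Finset.sum_comm
      _ = ∑ r ∈ range (k + 1), Stmt12Aux.uu σ r i :=
          Finset.sum_congr rfl fun r _ => Stmt12Aux.defGrad_qr σ hsym r i
      _ = ∑ j : Fin d, σ i j * X j := by
          simp only [Stmt12Aux.uu]
          rw [Finset.sum_comm]
          refine Finset.sum_congr rfl fun j _ => ?_
          rw [← Finset.sum_mul, Stmt12Aux.hcsum (Nat.lt_succ_of_le (hdeg i j))]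
  have hDGdeg : ∀ i j, (defGrad d q i j).totalDegree ≤ k := by
    intro i j
    rw [hDG i j]
    refine totalDegree_finsetSum_le fun r hr => ?_
    have hh : (defGrad d (Stmt12Aux.qr σ r) i j).IsHomogeneous r := by
      rw [defGrad]
      exact ((Stmt12Aux.isHomogeneous_pderiv (hqhom r i) j).add
        (Stmt12Aux.isHomogeneous_pderiv (hqhom r j) i)).C_mul _
    refine hh.totalDegree_le.trans ?_
    simp only [mem_range] at hr; omega
  have hDGsym : ∀ i j, defGrad d q i j = defGrad d q j i := by
    intro i j; rw [defGrad, defGrad, add_comm]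
  refine ⟨⟨defGrad d q, fun i j => σ i j - defGrad d q i j⟩,
    ⟨⟨q, hqdeg, rfl⟩, ?_, ?_, ?_, ?_⟩, ?_⟩
  · intro i j
    exact (totalDegree_sub _ _).trans (max_le (hdeg i j) (hDGdeg i j))
  · intro i j
    show σ i j - defGrad d q i j = σ j i - defGrad d q j i
    rw [hsym i j, hDGsym i j]
  · intro i
    show ∑ j : Fin d, (σ i j - defGrad d q i j) * X j = 0
    rw [Finset.sum_congr rfl fun j (_ : j ∈ univ) =>
      sub_mul (σ i j) (defGrad d q i j) (X j), Finset.sum_sub_distrib, hDGx i, sub_self]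
  · funext i j; simp
  · rintro ⟨P1, P2⟩ ⟨⟨q', hq'deg, hP1⟩, hdeg2, hsym2, hann2, hrep⟩
    subst hP1
    have hrep' : ∀ i j, σ i j = defGrad d q' i j + P2 i j :=
      fun i j => congrFun (congrFun hrep i) j
    have hx' : ∀ i, ∑ j : Fin d, defGrad d q' i j * X j = ∑ j : Fin d, σ i j * X j := by
      intro i
      conv_rhs => rw [Finset.sum_congr rfl fun j (_ : j ∈ univ) => by
        rw [hrep' i j, add_mul]]
      rw [Finset.sum_add_distrib, hann2 i, add_zero]
    set w : Fin d → MvPolynomial (Fin d) ℝ := fun i => q' i - q i with hwdef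
    have hw : ∀ i j, defGrad d w i j = defGrad d q' i j - defGrad d q i j := by
      intro i j
      simp only [defGrad, hwdef, map_sub]
      ring
    have h0 : ∀ i, ∑ j : Fin d, defGrad d w i j * X j = 0 := by
      intro i
      rw [Finset.sum_congr rfl fun j (_ : j ∈ univ) => by rw [hw i j, sub_mul],
        Finset.sum_sub_distrib, hx' i, hDGx i, sub_self]
    have hz := Stmt12Aux.zero_of w h0
    have e1 : defGrad d q' = defGrad d q := by
      funext i j
      have := hz i j
      rw [hw i j] at this
      exact sub_eq_zero.mp this
    have e2 : P2 = fun i j => σ i j - defGrad d q i j := by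
      funext i j
      rw [hrep' i j, ← congrFun (congrFun e1 i) j]
      ring
    rw [Prod.mk.injEq]
    exact ⟨e1, e2⟩
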